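/- Let ξ be a real quadratic irrational with ultimately periodic continued fraction ξ = [0; a₁,…,a_r, \overline{a_{r+1},…,a_{r+s}}] (the block a_{r+1},…,a_{r+s} repeated forever). Then the height of ξ satisfies H(ξ) ≤ 2 q_r q_{r+s}, where (p_n/q_n) is the convergent sequence of ξ. -/

import Mathlib

open Filter Finset Polynomial

/-- Numerators of the convergents of the continued fraction `[a 0; a 1, a 2, …]`. -/
def convP (a : ℕ → ℤ) : ℕ → ℤ
  | 0 => a 0
  | 1 => a 1 * a 0 + 1
  | (n+2) => a (n+2) * convP a (n+1) + convP a n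

/-- Denominators of the convergents of the continued fraction `[a 0; a 1, a 2, …]`. -/
def convQ (a : ℕ → ℤ) : ℕ → ℤ
  | 0 => 1
  | 1 => a 1
  | (n+2) => a (n+2) * convQ a (n+1) + convQ a n

/-- `ξ` is the value of the continued fraction with partial quotients `a`,
i.e. the limit of its convergents. -/
def IsCFValue (a : ℕ → ℤ) (ξ : ℝ) : Prop :=
  Filter.Tendsto (fun n => (convP a n : ℝ) / (convQ a n : ℝ)) Filter.atTop (nhds ξ)

/-- Naive height of an integer polynomial: max of the absolute values of its coefficients. -/
def polyHeight (P : Polynomial ℤ) : ℕ := P.support.sup fun i => (P.coeff i).natAbs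

/-- Naive height of a real algebraic number: the height of its minimal polynomial over `ℤ`
(an irreducible integer polynomial vanishing at `α`). -/
noncomputable def algHeight (α : ℝ) : ℕ :=
  sInf {h | ∃ P : Polynomial ℤ, Irreducible P ∧ Polynomial.aeval α P = 0 ∧ polyHeight P = h}

/-- `α` is algebraic of degree exactly `n` over `ℚ`. -/
def IsAlgDeg (α : ℝ) (n : ℕ) : Prop :=
  ∃ P : Polynomial ℤ, Irreducible P ∧ P.natDegree = n ∧ Polynomial.aeval α P = 0

namespace HCF

def pp (a : ℕ → ℤ) : ℕ → ℤ
  | 0 => 1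
  | (n+1) => convP a n

def qq (a : ℕ → ℤ) : ℕ → ℤ
  | 0 => 0
  | (n+1) => convQ a n

variable (a : ℕ → ℤ)

lemma convP_succ (n : ℕ) : convP a (n+1) = a (n+1) * convP a n + pp a n := by
  cases n <;> simp [convP, pp]

lemma convQ_succ (n : ℕ) : convQ a (n+1) = a (n+1) * convQ a n + qq a n := by
  cases n <;> simp [convQ, qq]

variable (ha0 : a 0 = 0) (ha : ∀ n, 1 ≤ n → 1 ≤ a n)
include ha

lemma one_le_convQ : ∀ n, 1 ≤ convQ a n ∧ 0 ≤ qq a n := by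
  intro n
  induction n with
  | zero => exact ⟨le_refl 1, le_refl 0⟩
  | succ n ih =>
    refine ⟨?_, by simpa [qq] using ih.1.trans' zero_le_one⟩
    rw [convQ_succ]
    nlinarith [ha (n+1) (by omega), ih.1, ih.2]

lemma convQ_mono : Monotone (convQ a) := by
  apply monotone_nat_of_le_succ
  intro n
  rw [convQ_succ]
  nlinarith [ha (n+1) (by omega), (one_le_convQ a ha n).1, (one_le_convQ a ha n).2]

lemma qq_le (n : ℕ) : 0 ≤ qq a n ∧ qq a n ≤ convQ a n := by
  cases n with
  | zero => exact ⟨le_refl 0, zero_le_one⟩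
  | succ n => exact ⟨(one_le_convQ a ha n).1.trans' zero_le_one,
      convQ_mono a ha (Nat.le_succ n)⟩

include ha0

lemma convP_le : ∀ n, (0 ≤ convP a n ∧ convP a n ≤ convQ a n) ∧
    (0 ≤ convP a (n+1) ∧ convP a (n+1) ≤ convQ a (n+1)) := by
  intro n
  induction n with
  | zero =>
    refine ⟨⟨?_, ?_⟩, ?_, ?_⟩ <;> simp [convP, convQ, ha0]
    exact ha 1 le_rfl
  | succ n ih =>
    refine ⟨ih.2, ?_, ?_⟩
    · show 0 ≤ a (n+2) * convP a (n+1) + convP a n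
      nlinarith [ha (n+2) (by omega), ih.1.1, ih.2.1]
    · show a (n+2) * convP a (n+1) + convP a n ≤ a (n+2) * convQ a (n+1) + convQ a n
      nlinarith [ha (n+2) (by omega), ih.1.2, ih.2.2]

lemma pp_le (n : ℕ) : 0 ≤ pp a n ∧ pp a n ≤ convQ a n := by
  cases n with
  | zero => exact ⟨zero_le_one, le_refl 1⟩
  | succ n => exact ⟨(convP_le a ha0 ha n).1.1,
      ((convP_le a ha0 ha n).1.2).trans (convQ_mono a ha (Nat.le_succ n))⟩

omit ha0 ha

/-- Determinant `p n * q (n-1) - p (n-1) * q n = ±1`. -/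
def det (n : ℕ) : ℤ := convP a n * qq a n - pp a n * convQ a n

lemma det_succ (n : ℕ) : det a (n+1) = - det a n := by
  simp only [det, convP_succ, convQ_succ, pp, qq]
  ring

lemma det_sq (n : ℕ) : det a n * det a n = 1 := by
  induction n with
  | zero => simp [det, convP, convQ, pp, qq]
  | succ n ih => rw [det_succ]; linarith [ih]

include ha
/-- `q n + q (n-1)` is strictly increasing. -/
lemma sum_strictMono : StrictMono (fun n => convQ a n + qq a n) := by
  apply strictMono_nat_of_lt_succ
  intro n
  simp only [convQ_succ, qq]
  nlinarith [ha (n+1) (by omega), (one_le_convQ a ha n).1, (one_le_convQ a ha n).2]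

omit ha

variable (r s : ℕ)

/-- Entries of the transfer matrix `B = M_{r+s} M_r⁻¹` with `M_{n+s} = B M_n` for `n ≥ r`. -/
def tA : ℤ := det a r * (convP a (r+s) * qq a r - pp a (r+s) * convQ a r)
def tB : ℤ := det a r * (pp a (r+s) * convP a r - convP a (r+s) * pp a r)
def tG : ℤ := det a r * (convQ a (r+s) * qq a r - qq a (r+s) * convQ a r)
def tD : ℤ := det a r * (qq a (r+s) * convP a r - convQ a (r+s) * pp a r)

variable (hper : ∀ n, r + 1 ≤ n → a (n + s) = a n)
include hper

lemma shift : ∀ n, r ≤ n →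
    (convP a (n+s) = tA a r s * convP a n + tB a r s * convQ a n ∧
     pp a (n+s) = tA a r s * pp a n + tB a r s * qq a n) ∧
    (convQ a (n+s) = tG a r s * convP a n + tD a r s * convQ a n ∧
     qq a (n+s) = tG a r s * pp a n + tD a r s * qq a n) := by
  intro n hn
  induction n, hn using Nat.le_induction with
  | base =>
    have hd := det_sq a r
    simp only [det] at hd
    simp only [tA, tB, tG, tD, det]
    refine ⟨⟨?_, ?_⟩, ?_, ?_⟩
    · linear_combination (-(convP a (r+s))) * hd
    · linear_combination (-(pp a (r+s))) * hd
    · linear_combination (-(convQ a (r+s))) * hd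
    · linear_combination (-(qq a (r+s))) * hd
  | succ n hn ih =>
    obtain ⟨⟨ihp, ihpp⟩, ihq, ihqq⟩ := ih
    have hp : a (n+s+1) = a (n+1) := by
      rw [show n+s+1 = n+1+s from by omega]; exact hper (n+1) (by omega)
    have e1 : n+1+s = (n+s)+1 := by omega
    refine ⟨⟨?_, ?_⟩, ?_, ?_⟩
    · rw [e1, convP_succ, hp, ihp, ihpp, convP_succ, convQ_succ]
      simp only [pp, qq]; ring
    · rw [e1]; simp only [pp, qq]; exact ihp
    · rw [e1, convQ_succ, hp, ihq, ihqq, convP_succ, convQ_succ]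
      simp only [pp, qq]; ring
    · rw [e1]; simp only [pp, qq]; exact ihq

end HCF

set_option maxHeartbeats 1000000 in
/-- If `ξ` is a real quadratic irrational with ultimately periodic continued fraction
`ξ = [0; a 1, …, a r, overline{a (r+1), …, a (r+s)}]`, then `H(ξ) ≤ 2 * q_r * q_{r+s}`. -/
theorem height_of_periodic_cf (a : ℕ → ℤ) (ha0 : a 0 = 0) (ha : ∀ n, 1 ≤ n → 1 ≤ a n)
    (r s : ℕ) (hs : 1 ≤ s) (hper : ∀ n, r + 1 ≤ n → a (n + s) = a n)
    (ξ : ℝ) (hξ : IsCFValue a ξ) (hquad : IsAlgDeg ξ 2) :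
    (algHeight ξ : ℝ) ≤ 2 * (convQ a r : ℝ) * (convQ a (r + s) : ℝ) := by
  classical
  obtain ⟨P₀, hirr, hdeg, hroot⟩ := hquad
  have hshift := HCF.shift a r s hper
  set A := HCF.tA a r s with hAdef
  set B := HCF.tB a r s with hBdef
  set G := HCF.tG a r s with hGdef
  set D := HCF.tD a r s with hDdef
  have hq1 : ∀ n, (1:ℤ) ≤ convQ a n := fun n => (HCF.one_le_convQ a ha n).1
  have hqR : ∀ n, (0:ℝ) < (convQ a n : ℝ) := fun n => by
    have := hq1 n; exact_mod_cast lt_of_lt_of_le zero_lt_one (by exact_mod_cast this)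
  set x : ℕ → ℝ := fun n => (convP a n : ℝ) / (convQ a n : ℝ) with hxdef
  have hxlim : Tendsto x atTop (nhds ξ) := hξ
  -- denominator identity
  have hden : ∀ n, r ≤ n → (G:ℝ) * x n + (D:ℝ) = (convQ a (n+s) : ℝ) / (convQ a n : ℝ) := by
    intro n hn
    have h := (hshift n hn).2.1
    have h' : ((convQ a (n+s)) : ℝ) = (G:ℝ) * (convP a n : ℝ) + (D:ℝ) * (convQ a n : ℝ) := by
      exact_mod_cast congrArg (fun z : ℤ => (z : ℝ)) h
    rw [h', hxdef]
    have hq0 : ((convQ a n : ℤ) : ℝ) ≠ 0 := ne_of_gt (hqR n)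
    field_simp
  have hnum : ∀ n, r ≤ n → (A:ℝ) * x n + (B:ℝ) = (convP a (n+s) : ℝ) / (convQ a n : ℝ) := by
    intro n hn
    have h := (hshift n hn).1.1
    have h' : ((convP a (n+s)) : ℝ) = (A:ℝ) * (convP a n : ℝ) + (B:ℝ) * (convQ a n : ℝ) := by
      exact_mod_cast congrArg (fun z : ℤ => (z : ℝ)) h
    rw [h', hxdef]
    have hq0 : ((convQ a n : ℤ) : ℝ) ≠ 0 := ne_of_gt (hqR n)
    field_simp
  have hLlim : Tendsto (fun n => (G:ℝ) * x n + (D:ℝ)) atTop (nhds ((G:ℝ)*ξ + D)) :=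
    (hxlim.const_mul _).add_const _
  have hL1 : 1 ≤ (G:ℝ)*ξ + D := by
    apply ge_of_tendsto hLlim
    filter_upwards [eventually_ge_atTop r] with n hn
    rw [hden n hn]
    rw [one_le_div (hqR n)]
    exact_mod_cast HCF.convQ_mono a ha (Nat.le_add_right n s)
  have hLne : (G:ℝ)*ξ + D ≠ 0 := by linarith
  have hdiv : Tendsto (fun n => ((A:ℝ) * x n + B) / ((G:ℝ) * x n + D)) atTop
      (nhds (((A:ℝ)*ξ + B) / ((G:ℝ)*ξ + D))) :=
    Tendsto.div ((hxlim.const_mul _).add_const _) hLlim hLne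
  have hsub : Tendsto (fun n => x (n+s)) atTop (nhds ξ) :=
    hxlim.comp (tendsto_add_atTop_nat s)
  have heq : Tendsto (fun n => ((A:ℝ) * x n + B) / ((G:ℝ) * x n + D)) atTop (nhds ξ) := by
    apply hsub.congr'
    filter_upwards [eventually_ge_atTop r] with n hn
    rw [hnum n hn, hden n hn, hxdef]
    have h1 : (convQ a n : ℝ) ≠ 0 := ne_of_gt (hqR n)
    have h2 : (convQ a (n+s) : ℝ) ≠ 0 := ne_of_gt (hqR (n+s))
    field_simp
  have huniq : ((A:ℝ)*ξ + B) / ((G:ℝ)*ξ + D) = ξ := tendsto_nhds_unique hdiv heq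
  have key : (G:ℝ)*ξ^2 + ((D:ℝ) - A)*ξ + (-(B:ℝ)) = 0 := by
    have := (div_eq_iff hLne).mp huniq
    nlinarith [this]
  -- the quadratic polynomial
  set Qp : Polynomial ℤ := C G * X^2 + C (D - A) * X + C (-B) with hQpdef
  have hc0 : Qp.coeff 0 = -B := by
    rw [hQpdef]
    simp only [coeff_add, coeff_C_mul, coeff_X_pow, coeff_X, coeff_C]
    norm_num
  have hc1 : Qp.coeff 1 = D - A := by
    rw [hQpdef]
    simp only [coeff_add, coeff_C_mul, coeff_X_pow, coeff_X, coeff_C]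
    norm_num
  have hc2 : Qp.coeff 2 = G := by
    rw [hQpdef]
    simp only [coeff_add, coeff_C_mul, coeff_X_pow, coeff_X, coeff_C]
    norm_num
  have hcoeffs : ∀ i, 3 ≤ i → Qp.coeff i = 0 := by
    intro i hi
    apply coeff_eq_zero_of_natDegree_lt
    exact lt_of_le_of_lt natDegree_quadratic_le (by omega)
  have hQroot : Polynomial.aeval ξ Qp = 0 := by
    rw [hQpdef]
    simp only [map_add, map_mul, map_pow, aeval_X]
    rw [aeval_C, aeval_C, aeval_C]
    simp only [algebraMap_int_eq, eq_intCast]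
    push_cast
    linear_combination key
  have hQne : Qp ≠ 0 := by
    intro h
    have hG0 : G = 0 := by rw [← hc2, h, coeff_zero]
    have hDA : D = A := by have := hc1; rw [h, coeff_zero] at this; omega
    have hB0 : B = 0 := by have := hc0; rw [h, coeff_zero] at this; omega
    obtain ⟨⟨hp', hpp'⟩, hq', hqq'⟩ := hshift r le_rfl
    rw [hB0] at hp' hpp'
    rw [hG0, hDA] at hq' hqq'
    simp only [zero_mul, add_zero, mul_zero, zero_add] at hp' hpp' hq' hqq'
    -- det a (r+s) = A^2 * det a r
    have hdet : HCF.det a (r+s) = A * A * HCF.det a r := by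
      simp only [HCF.det, hp', hpp', hq', hqq']; ring
    have h1 := HCF.det_sq a r
    have h2 := HCF.det_sq a (r+s)
    rw [hdet] at h2
    have h3 : (A*A)*(A*A) = 1 := by linear_combination h2 - (A*A*A*A) * h1
    have hA2 : A * A = 1 := by
      rcases Int.isUnit_iff.mp (IsUnit.of_mul_eq_one _ h3) with h' | h'
      · exact h'
      · nlinarith [sq_nonneg A]
    have hA : A = 1 ∨ A = -1 := Int.isUnit_iff.mp (IsUnit.of_mul_eq_one _ hA2)
    have hlt : convQ a r + HCF.qq a r < convQ a (r+s) + HCF.qq a (r+s) :=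
      HCF.sum_strictMono a ha (by omega)
    have hqr := hq1 r
    have hqqr := (HCF.qq_le a ha r).1
    rcases hA with h | h <;> rw [hq', hqq', h] at hlt <;> linarith
  -- Gauss lemma: P₀ divides Qp over ℤ
  have hprim : P₀.IsPrimitive := by
    intro k hk
    obtain ⟨g, hg⟩ := hk
    rcases hirr.isUnit_or_isUnit hg with h | h
    · exact isUnit_C.mp h
    · exfalso
      obtain ⟨u, hu, hcu⟩ := Polynomial.isUnit_iff.mp h
      rw [hg, ← hcu, ← C_mul] at hdeg
      rw [natDegree_C] at hdeg
      exact absurd hdeg (by norm_num)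
  have hinj : Function.Injective (algebraMap ℤ ℚ) := fun x y h => by
    simpa [algebraMap_int_eq, eq_intCast] using h
  set P₁ := P₀.map (algebraMap ℤ ℚ) with hP₁def
  set Q₁ := Qp.map (algebraMap ℤ ℚ) with hQ₁def
  have hP₁ne : P₁ ≠ 0 := (Polynomial.map_ne_zero_iff hinj).mpr hirr.ne_zero
  have hP₁irr : Irreducible P₁ :=
    (hprim.irreducible_iff_irreducible_map_fraction_map (K := ℚ)).mp hirr
  have hP₁root : Polynomial.aeval ξ P₁ = 0 := by
    rw [hP₁def, aeval_map_algebraMap]; exact hroot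
  have hQ₁root : Polynomial.aeval ξ Q₁ = 0 := by
    rw [hQ₁def, aeval_map_algebraMap]; exact hQroot
  have hint : IsIntegral ℚ ξ := isAlgebraic_iff_isIntegral.mp ⟨P₁, hP₁ne, hP₁root⟩
  have hmdvd : minpoly ℚ ξ ∣ P₁ := minpoly.dvd ℚ ξ hP₁root
  have hassoc : Associated (minpoly ℚ ξ) P₁ :=
    (minpoly.irreducible hint).associated_of_dvd hP₁irr hmdvd
  have hP₁dvdQ₁ : P₁ ∣ Q₁ := hassoc.symm.dvd.trans (minpoly.dvd ℚ ξ hQ₁root)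
  have hcontne : (Qp.content : ℚ) ≠ 0 := by
    exact_mod_cast fun h => hQne (content_eq_zero_iff.mp (by exact_mod_cast h))
  have hP₁dvdQpp : P₁ ∣ Qp.primPart.map (algebraMap ℤ ℚ) := by
    have hfac : Q₁ = C ((Qp.content : ℚ)) * Qp.primPart.map (algebraMap ℤ ℚ) := by
      rw [hQ₁def]
      conv_lhs => rw [Qp.eq_C_content_mul_primPart]
      rw [Polynomial.map_mul, map_C]
      norm_num [algebraMap_int_eq, eq_intCast]
    rw [hfac] at hP₁dvdQ₁
    exact ((isUnit_C.mpr (isUnit_iff_ne_zero.mpr hcontne)).dvd_mul_left).mp hP₁dvdQ₁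
  have hdvd : P₀ ∣ Qp :=
    (hprim.dvd_of_fraction_map_dvd_fraction_map hP₁dvdQpp).trans
      Qp.primPart_dvd
  -- hence Qp = P₀ * C k for a nonzero integer k
  obtain ⟨g, hg⟩ := hdvd
  have hgne : g ≠ 0 := by rintro rfl; exact hQne (by rw [hg, mul_zero])
  have hdg : Qp.natDegree = P₀.natDegree + g.natDegree := by
    rw [hg]; exact natDegree_mul hirr.ne_zero hgne
  have hg0 : g.natDegree = 0 := by
    have h2 : Qp.natDegree ≤ 2 := natDegree_quadratic_le
    omega
  have hgC : g = C (g.coeff 0) := eq_C_of_natDegree_eq_zero hg0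
  set k := g.coeff 0 with hkdef
  have hkne : k ≠ 0 := by
    intro h
    apply hgne
    rw [hgC, h]
    simp
  have hcoeff : ∀ i, Qp.coeff i = P₀.coeff i * k := by
    intro i; rw [hg, hgC, coeff_mul_C]
  have hble : ∀ i, |P₀.coeff i| ≤ |Qp.coeff i| := by
    intro i
    rw [hcoeff i, abs_mul]
    exact le_mul_of_one_le_right (abs_nonneg _) (Int.one_le_abs hkne)
  -- coefficient bounds
  set K2 : ℤ := 2 * (convQ a r * convQ a (r+s)) with hK2def
  have hεabs : |HCF.det a r| = 1 := by
    rcases Int.isUnit_iff.mp (IsUnit.of_mul_eq_one _ (HCF.det_sq a r)) with h | h <;>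
      simp [h]
  have hq1r := hq1 r
  have hq1s := hq1 (r+s)
  obtain ⟨hqq0r, hqqler⟩ := HCF.qq_le a ha r
  obtain ⟨hqq0s, hqqles⟩ := HCF.qq_le a ha (r+s)
  obtain ⟨hp0r, hpler⟩ := (HCF.convP_le a ha0 ha r).1
  obtain ⟨hp0s, hples⟩ := (HCF.convP_le a ha0 ha (r+s)).1
  obtain ⟨hpp0r, hppler⟩ := HCF.pp_le a ha0 ha r
  obtain ⟨hpp0s, hpples⟩ := HCF.pp_le a ha0 ha (r+s)
  have hq0r : (0:ℤ) ≤ convQ a r := by linarith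
  have hq0s : (0:ℤ) ≤ convQ a (r+s) := by linarith
  have hqqprod : convQ a (r+s) * convQ a r ≤ K2 := by
    rw [hK2def]; nlinarith [hq1 r, hq1 (r+s)]
  have hGb : |G| ≤ K2 := by
    rw [hGdef, HCF.tG, abs_mul, hεabs, one_mul, abs_le]
    have h1 : HCF.qq a (r+s) * convQ a r ≤ convQ a (r+s) * convQ a r :=
      mul_le_mul_of_nonneg_right hqqles hq0r
    have h2 : convQ a (r+s) * HCF.qq a r ≤ convQ a (r+s) * convQ a r :=
      mul_le_mul_of_nonneg_left hqqler hq0s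
    have h3 : (0:ℤ) ≤ HCF.qq a (r+s) * convQ a r := mul_nonneg hqq0s hq0r
    have h4 : (0:ℤ) ≤ convQ a (r+s) * HCF.qq a r := mul_nonneg hq0s hqq0r
    constructor <;> linarith
  have hBb : |(-B)| ≤ K2 := by
    rw [abs_neg, hBdef, HCF.tB, abs_mul, hεabs, one_mul, abs_le]
    have h1 : HCF.pp a (r+s) * convP a r ≤ convQ a (r+s) * convQ a r :=
      mul_le_mul hpples hpler hp0r hq0s
    have h2 : convP a (r+s) * HCF.pp a r ≤ convQ a (r+s) * convQ a r :=
      mul_le_mul hples hppler hpp0r hq0s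
    have h3 : (0:ℤ) ≤ HCF.pp a (r+s) * convP a r := mul_nonneg hpp0s hp0r
    have h4 : (0:ℤ) ≤ convP a (r+s) * HCF.pp a r := mul_nonneg hp0s hpp0r
    constructor <;> linarith
  have hDAb : |D - A| ≤ K2 := by
    have hDA : D - A = HCF.det a r * ((HCF.qq a (r+s) * convP a r + HCF.pp a (r+s) * convQ a r)
        - (convQ a (r+s) * HCF.pp a r + convP a (r+s) * HCF.qq a r)) := by
      rw [hDdef, hAdef, HCF.tD, HCF.tA]; ring
    rw [hDA, abs_mul, hεabs, one_mul, abs_le]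
    have m1 : HCF.qq a (r+s) * convP a r ≤ convQ a (r+s) * convQ a r :=
      mul_le_mul hqqles hpler hp0r hq0s
    have m2 : HCF.pp a (r+s) * convQ a r ≤ convQ a (r+s) * convQ a r :=
      mul_le_mul_of_nonneg_right hpples hq0r
    have m3 : convQ a (r+s) * HCF.pp a r ≤ convQ a (r+s) * convQ a r :=
      mul_le_mul_of_nonneg_left hppler hq0s
    have m4 : convP a (r+s) * HCF.qq a r ≤ convQ a (r+s) * convQ a r :=
      mul_le_mul hples hqqler hqq0r hq0s
    have n1 : (0:ℤ) ≤ HCF.qq a (r+s) * convP a r := mul_nonneg hqq0s hp0r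
    have n2 : (0:ℤ) ≤ HCF.pp a (r+s) * convQ a r := mul_nonneg hpp0s hq0r
    have n3 : (0:ℤ) ≤ convQ a (r+s) * HCF.pp a r := mul_nonneg hq0s hpp0r
    have n4 : (0:ℤ) ≤ convP a (r+s) * HCF.qq a r := mul_nonneg hp0s hqq0r
    constructor <;> linarith
  have hKpos : (0:ℤ) ≤ K2 := by rw [hK2def]; nlinarith [hq1 r, hq1 (r+s)]
  have hPH : polyHeight P₀ ≤ K2.toNat := by
    apply Finset.sup_le
    intro i hi
    have hi2 : i ≤ 2 := hdeg ▸ le_natDegree_of_mem_supp i hi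
    have hb : |P₀.coeff i| ≤ K2 := by
      interval_cases i
      · exact (hble 0).trans (by rw [hc0]; exact hBb)
      · exact (hble 1).trans (by rw [hc1]; exact hDAb)
      · exact (hble 2).trans (by rw [hc2]; exact hGb)
    rw [Int.abs_eq_natAbs] at hb
    omega
  have hh : algHeight ξ ≤ polyHeight P₀ := Nat.sInf_le ⟨P₀, hirr, hroot, rfl⟩
  have hfin : ((K2.toNat : ℕ) : ℝ) = 2 * (convQ a r : ℝ) * (convQ a (r+s) : ℝ) := by
    have h := Int.toNat_of_nonneg hKpos
    calc ((K2.toNat : ℕ) : ℝ) = ((K2 : ℤ) : ℝ) := by exact_mod_cast congrArg (Int.cast : ℤ → ℝ) h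
      _ = _ := by rw [hK2def]; push_cast; ring
  calc (algHeight ξ : ℝ) ≤ (K2.toNat : ℝ) := by exact_mod_cast hh.trans hPH
    _ = 2 * (convQ a r : ℝ) * (convQ a (r + s) : ℝ) := hfin
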